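/- Let A be a positive stochastic H×H real matrix whose powers A^μ converge entrywise to M̄, let Q be a diagonal H×H matrix with strictly positive diagonal entries, let m_s ∈ (0,1), and let t₀ > 0. Then, entrywise, the matrix [exp(m_s·log(t/t₀)·(Q·A·Q⁻¹)) − I] / ((t/t₀)^{m_s} − 1) converges to Q·M̄·Q⁻¹ as t → +∞. -/

import Mathlib

open Matrix Filter

open Nat

open scoped NNReal

noncomputable section
namespace Stmt5Aux

variable {H : ℕ}

def entSum (X : Matrix (Fin H) (Fin H) ℝ) : ℝ := ∑ i, ∑ j, |X i j|

lemma entSum_nonneg (X : Matrix (Fin H) (Fin H) ℝ) : 0 ≤ entSum X := by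
  apply Finset.sum_nonneg; intro i _; apply Finset.sum_nonneg; intro j _; exact abs_nonneg _

lemma abs_entry_le_entSum (X : Matrix (Fin H) (Fin H) ℝ) (i j : Fin H) : |X i j| ≤ entSum X := by
  have h1 : |X i j| ≤ ∑ j', |X i j'| :=
    Finset.single_le_sum (fun k _ => abs_nonneg (X i k)) (Finset.mem_univ j)
  refine h1.trans ?_
  exact Finset.single_le_sum (f := fun i => ∑ j', |X i j'|)
    (fun k _ => Finset.sum_nonneg fun l _ => abs_nonneg _) (Finset.mem_univ i)

lemma entSum_mul_le (X Y : Matrix (Fin H) (Fin H) ℝ) :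
    entSum (X * Y) ≤ entSum X * entSum Y := by
  calc entSum (X * Y) ≤ ∑ i, ∑ j, ∑ k, |X i k| * |Y k j| := by
        refine Finset.sum_le_sum fun i _ => Finset.sum_le_sum fun j _ => ?_
        rw [Matrix.mul_apply]
        refine (Finset.abs_sum_le_sum_abs _ _).trans ?_
        exact le_of_eq (Finset.sum_congr rfl fun k _ => abs_mul _ _)
    _ = ∑ i, ∑ k, |X i k| * ∑ j, |Y k j| := by
        refine Finset.sum_congr rfl fun i _ => ?_
        rw [Finset.sum_comm]
        exact Finset.sum_congr rfl fun k _ => (Finset.mul_sum _ _ _).symm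
    _ = ∑ k, (∑ i, |X i k|) * (∑ j, |Y k j|) := by
        rw [Finset.sum_comm]
        exact Finset.sum_congr rfl fun k _ => (Finset.sum_mul _ _ _).symm
    _ ≤ ∑ k, (∑ i, |X i k|) * entSum Y := by
        refine Finset.sum_le_sum fun k _ => ?_
        refine mul_le_mul_of_nonneg_left ?_ (Finset.sum_nonneg fun i _ => abs_nonneg _)
        exact Finset.single_le_sum (f := fun k => ∑ j, |Y k j|)
          (fun l _ => Finset.sum_nonneg fun m _ => abs_nonneg _) (Finset.mem_univ k)
    _ = entSum X * entSum Y := by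
        rw [← Finset.sum_mul]
        congr 1
        exact Finset.sum_comm



lemma geom_bound (N : Matrix (Fin H) (Fin H) ℝ)
    (hN : Filter.Tendsto (fun μ : ℕ => entSum (N ^ μ)) atTop (nhds 0)) :
    ∃ K ρ : ℝ, 0 ≤ K ∧ 0 < ρ ∧ ρ < 1 ∧ ∀ k : ℕ, entSum (N ^ k) ≤ K * ρ ^ k := by
  have h12 : (0:ℝ) < 1/2 := by norm_num
  obtain ⟨μ₁, hμ₁⟩ := (hN.eventually (gt_mem_nhds h12)).exists_forall_of_atTop
  set μ₀ := μ₁ + 1 with hμ₀def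
  have hμ₀pos : 0 < μ₀ := Nat.succ_pos _
  have hsmall : entSum (N ^ μ₀) ≤ 1/2 := (hμ₁ μ₀ (Nat.le_succ _)).le
  set ρ : ℝ := (1/2 : ℝ) ^ ((μ₀ : ℝ)⁻¹) with hρdef
  have hρpos : 0 < ρ := Real.rpow_pos_of_pos h12 _
  have hρlt : ρ < 1 := by
    apply Real.rpow_lt_one (by norm_num) (by norm_num)
    positivity
  have hρle1 : ρ ≤ 1 := hρlt.le
  have hρμ₀ : ρ ^ μ₀ = 1/2 := by
    rw [hρdef, ← Real.rpow_natCast ((1/2:ℝ) ^ ((μ₀:ℝ)⁻¹)) μ₀, ← Real.rpow_mul (by norm_num),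
      inv_mul_cancel₀ (by exact_mod_cast hμ₀pos.ne'), Real.rpow_one]
  set K : ℝ := 2 * ∑ r ∈ Finset.range μ₀, (1 + entSum (N ^ r)) with hKdef
  have hKhalf : ∀ r < μ₀, entSum (N ^ r) ≤ K / 2 := by
    intro r hr
    have : entSum (N ^ r) ≤ ∑ r' ∈ Finset.range μ₀, (1 + entSum (N ^ r')) := by
      have h1 : entSum (N ^ r) ≤ 1 + entSum (N ^ r) := by linarith
      refine h1.trans ?_
      exact Finset.single_le_sum (f := fun r' => 1 + entSum (N ^ r'))
        (fun l _ => by have h := entSum_nonneg (N ^ l); linarith)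
        (Finset.mem_range.2 hr)
    rw [hKdef]; linarith
  have hK0 : 0 ≤ K := by
    have := hKhalf 0 hμ₀pos
    have := entSum_nonneg (N ^ 0)
    linarith
  refine ⟨K, ρ, hK0, hρpos, hρlt, ?_⟩
  intro k
  induction k using Nat.strong_induction_on with
  | _ k ih =>
    by_cases hk : k < μ₀
    · have h1 : entSum (N ^ k) ≤ K / 2 := hKhalf k hk
      have h2 : ρ ^ μ₀ ≤ ρ ^ k := pow_le_pow_of_le_one hρpos.le hρle1 hk.le
      rw [hρμ₀] at h2
      nlinarith
    · push_neg at hk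
      have hkμ : k - μ₀ < k := by omega
      have hsplit : N ^ k = N ^ μ₀ * N ^ (k - μ₀) := by
        rw [← pow_add]; congr 1; omega
      have h1 := entSum_mul_le (N ^ μ₀) (N ^ (k - μ₀))
      have h2 := ih (k - μ₀) hkμ
      have h3 : entSum (N ^ k) ≤ (1/2) * (K * ρ ^ (k - μ₀)) := by
        rw [hsplit]
        refine h1.trans ?_
        have := entSum_nonneg (N ^ (k - μ₀))
        nlinarith
      have h4 : ρ ^ k = (1/2) * ρ ^ (k - μ₀) := by
        conv_lhs => rw [show k = μ₀ + (k - μ₀) by omega]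
        rw [pow_add, hρμ₀]
      calc entSum (N ^ k) ≤ (1/2) * (K * ρ ^ (k - μ₀)) := h3
        _ = K * ρ ^ k := by rw [h4]; ring


lemma summable_inv_fact_mul (c : ℝ) : Summable (fun n : ℕ => ((n ! : ℝ))⁻¹ * c ^ n) := by
  have := Real.summable_pow_div_factorial c
  simpa [div_eq_mul_inv, mul_comm] using this

lemma summable_tail (c : ℝ) : Summable (fun n : ℕ => (((n+1)! : ℝ))⁻¹ * c ^ (n+1)) := by
  exact (summable_nat_add_iff 1).2 (summable_inv_fact_mul c)

lemma real_exp_tsum (c : ℝ) : Real.exp c = ∑' n : ℕ, ((n ! : ℝ))⁻¹ * c ^ n := by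
  rw [Real.exp_eq_exp_ℝ, NormedSpace.exp_eq_tsum ℝ]
  simp [smul_eq_mul]

lemma exp_tail (c : ℝ) :
    (∑' n : ℕ, (((n+1)! : ℝ))⁻¹ * c ^ (n+1)) = Real.exp c - 1 := by
  have h0 := real_exp_tsum c
  have h1 : Real.exp c = 1 + ∑' n : ℕ, (((n+1)! : ℝ))⁻¹ * c ^ (n+1) := by
    rw [h0, Summable.tsum_eq_zero_add (summable_inv_fact_mul c)]
    simp
  rw [h1]; ring

lemma exp_smul_idem (p : Matrix (Fin H) (Fin H) ℝ) (hp : p * p = p) (c : ℝ) :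
    NormedSpace.exp (c • p) = 1 + (Real.exp c - 1) • p := by
  letI : SeminormedRing (Matrix (Fin H) (Fin H) ℝ) := Matrix.linftyOpSemiNormedRing
  letI : NormedRing (Matrix (Fin H) (Fin H) ℝ) := Matrix.linftyOpNormedRing
  letI : NormedAlgebra ℝ (Matrix (Fin H) (Fin H) ℝ) := Matrix.linftyOpNormedAlgebra
  have hpn : ∀ n : ℕ, p ^ (n + 1) = p := by
    intro n; induction n with
    | zero => simp
    | succ m ih => rw [pow_succ, ih, hp]
  have hs : Summable (fun n : ℕ => ((n ! : ℝ))⁻¹ • (c • p) ^ n) :=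
    NormedSpace.expSeries_summable' (𝕂 := ℝ) (c • p)
  have h1 : ∀ n : ℕ, (((n+1)! : ℝ))⁻¹ • (c • p) ^ (n+1) = ((((n+1)! : ℝ))⁻¹ * c ^ (n+1)) • p := by
    intro n
    rw [smul_pow, hpn, smul_smul]
  have key : NormedSpace.exp (c • p) = 1 + (Real.exp c - 1) • p := by
    simp only [NormedSpace.exp_eq_tsum ℝ]
    rw [Summable.tsum_eq_zero_add hs]
    rw [tsum_congr h1, Summable.tsum_smul_const (summable_tail c) p, exp_tail c]
    simp
  exact key

lemma mul_exp_of_mul_eq_zero (M N : Matrix (Fin H) (Fin H) ℝ) (h : M * N = 0) (c : ℝ) :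
    M * NormedSpace.exp (c • N) = M := by
  letI : SeminormedRing (Matrix (Fin H) (Fin H) ℝ) := Matrix.linftyOpSemiNormedRing
  letI : NormedRing (Matrix (Fin H) (Fin H) ℝ) := Matrix.linftyOpNormedRing
  letI : NormedAlgebra ℝ (Matrix (Fin H) (Fin H) ℝ) := Matrix.linftyOpNormedAlgebra
  have hs : Summable (fun n : ℕ => ((n ! : ℝ))⁻¹ • (c • N) ^ n) :=
    NormedSpace.expSeries_summable' (𝕂 := ℝ) (c • N)
  have key : M * NormedSpace.exp (c • N) = M := by
    simp only [NormedSpace.exp_eq_tsum ℝ]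
    rw [← hs.tsum_mul_left M]
    rw [tsum_eq_single 0 ?_]
    · simp
    · intro n hn
      obtain ⟨m, rfl⟩ := Nat.exists_eq_succ_of_ne_zero hn
      have hMN : ∀ m : ℕ, M * N ^ (m + 1) = 0 := by
        intro m; induction m with
        | zero => simpa using h
        | succ k ih => rw [pow_succ, ← mul_assoc, ih, zero_mul]
      have hMN := hMN m
      rw [mul_smul_comm, smul_pow, mul_smul_comm, hMN]
      simp
  exact key


lemma abs_exp_entry_le (N : Matrix (Fin H) (Fin H) ℝ) (K ρ : ℝ) (hK : 0 ≤ K)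
    (hρ : 0 ≤ ρ) (hpow : ∀ k : ℕ, entSum (N ^ k) ≤ K * ρ ^ k)
    (c : ℝ) (hc : 0 ≤ c) (i j : Fin H) :
    |(NormedSpace.exp (c • N)) i j| ≤ K * Real.exp (ρ * c) := by
  letI : SeminormedRing (Matrix (Fin H) (Fin H) ℝ) := Matrix.linftyOpSemiNormedRing
  letI : NormedRing (Matrix (Fin H) (Fin H) ℝ) := Matrix.linftyOpNormedRing
  letI : NormedAlgebra ℝ (Matrix (Fin H) (Fin H) ℝ) := Matrix.linftyOpNormedAlgebra
  have hentry : ∀ X : Matrix (Fin H) (Fin H) ℝ, |X i j| ≤ ‖X‖ := by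
    intro X
    have h1 : ‖X i j‖₊ ≤ ∑ j', ‖X i j'‖₊ :=
      Finset.single_le_sum (f := fun j' => ‖X i j'‖₊) (fun k _ => _root_.zero_le)
        (Finset.mem_univ j)
    have h2 : (∑ j', ‖X i j'‖₊) ≤ Finset.univ.sup fun i' => ∑ j', ‖X i' j'‖₊ :=
      Finset.le_sup (f := fun i' => ∑ j', ‖X i' j'‖₊) (Finset.mem_univ i)
    have := h1.trans h2
    rw [Matrix.linfty_opNorm_def]
    calc |X i j| = ((‖X i j‖₊ : ℝ)) := by simp [Real.norm_eq_abs]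
      _ ≤ _ := NNReal.coe_le_coe.2 this
  have hnorm_le : ∀ X : Matrix (Fin H) (Fin H) ℝ, ‖X‖ ≤ entSum X := by
    intro X
    rw [Matrix.linfty_opNorm_def]
    have h1 : (Finset.univ.sup fun i' => ∑ j', ‖X i' j'‖₊) ≤ ∑ i', ∑ j', ‖X i' j'‖₊ :=
      Finset.sup_le fun i' _ =>
        Finset.single_le_sum (f := fun i'' => ∑ j', ‖X i'' j'‖₊)
          (fun k _ => _root_.zero_le) (Finset.mem_univ i')
    calc ((Finset.univ.sup fun i' => ∑ j', ‖X i' j'‖₊ : ℝ≥0) : ℝ)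
        ≤ ((∑ i', ∑ j', ‖X i' j'‖₊ : ℝ≥0) : ℝ) := NNReal.coe_le_coe.2 h1
      _ = entSum X := by
          push_cast
          simp [entSum, Real.norm_eq_abs, abs_abs]
  have hterm : ∀ n : ℕ, ‖((n ! : ℝ))⁻¹ • (c • N) ^ n‖ ≤ K * (((n ! : ℝ))⁻¹ * (ρ * c) ^ n) := by
    intro n
    rw [norm_smul, smul_pow, norm_smul]
    have h1 : ‖N ^ n‖ ≤ K * ρ ^ n := (hnorm_le _).trans (hpow n)
    have h2 : ‖(c : ℝ) ^ n‖ = c ^ n := by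
      rw [Real.norm_eq_abs, abs_pow, abs_of_nonneg hc]
    have h3 : ‖((n ! : ℝ))⁻¹‖ = ((n ! : ℝ))⁻¹ := by
      rw [Real.norm_eq_abs, abs_of_nonneg (by positivity)]
    rw [h2, h3, mul_pow]
    have hn : (0:ℝ) ≤ ((n ! : ℝ))⁻¹ := by positivity
    have hcn : (0:ℝ) ≤ c ^ n := by positivity
    calc ((n ! : ℝ))⁻¹ * (c ^ n * ‖N ^ n‖)
        ≤ ((n ! : ℝ))⁻¹ * (c ^ n * (K * ρ ^ n)) := by
          refine mul_le_mul_of_nonneg_left ?_ hn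
          exact mul_le_mul_of_nonneg_left h1 hcn
      _ = K * (((n ! : ℝ))⁻¹ * (ρ ^ n * c ^ n)) := by ring
  have hgs : Summable (fun n : ℕ => K * (((n ! : ℝ))⁻¹ * (ρ * c) ^ n)) :=
    (summable_inv_fact_mul (ρ * c)).mul_left K
  have hs : Summable (fun n : ℕ => ((n ! : ℝ))⁻¹ • (c • N) ^ n) :=
    NormedSpace.expSeries_summable' (𝕂 := ℝ) (c • N)
  have hns : Summable (fun n : ℕ => ‖((n ! : ℝ))⁻¹ • (c • N) ^ n‖) :=
    NormedSpace.norm_expSeries_summable' (𝕂 := ℝ) (c • N)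
  have key : |(NormedSpace.exp (c • N)) i j| ≤ K * Real.exp (ρ * c) := by
    simp only [NormedSpace.exp_eq_tsum ℝ]
    calc |(∑' n : ℕ, ((n ! : ℝ))⁻¹ • (c • N) ^ n) i j|
        ≤ ‖∑' n : ℕ, ((n ! : ℝ))⁻¹ • (c • N) ^ n‖ := hentry _
      _ ≤ ∑' n : ℕ, ‖((n ! : ℝ))⁻¹ • (c • N) ^ n‖ := norm_tsum_le_tsum_norm hns
      _ ≤ ∑' n : ℕ, K * (((n ! : ℝ))⁻¹ * (ρ * c) ^ n) := Summable.tsum_le_tsum hterm hns hgs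
      _ = K * ∑' n : ℕ, (((n ! : ℝ))⁻¹ * (ρ * c) ^ n) := tsum_mul_left
      _ = K * Real.exp (ρ * c) := by rw [← real_exp_tsum]
  exact key


lemma exp_decomp (A Mbar : Matrix (Fin H) (Fin H) ℝ) (hAM : A * Mbar = Mbar)
    (hMA : Mbar * A = Mbar) (hMM : Mbar * Mbar = Mbar) (c : ℝ) :
    NormedSpace.exp (c • A)
      = 1 + (Real.exp c - 1) • Mbar + (NormedSpace.exp (c • (A - Mbar)) - 1) := by
  have hMN : Mbar * (A - Mbar) = 0 := by rw [Matrix.mul_sub, hMA, hMM, sub_self]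
  have hNM : (A - Mbar) * Mbar = 0 := by rw [Matrix.sub_mul, hAM, hMM, sub_self]
  have hcomm : Commute (c • Mbar) (c • (A - Mbar)) := by
    show _ = _
    rw [smul_mul_assoc, mul_smul_comm, hMN, smul_mul_assoc, mul_smul_comm, hNM]
  have hA : c • A = c • Mbar + c • (A - Mbar) := by
    rw [← smul_add]
    congr 1
    abel
  rw [hA, Matrix.exp_add_of_commute _ _ hcomm, exp_smul_idem Mbar hMM c,
    add_mul, one_mul, smul_mul_assoc, mul_exp_of_mul_eq_zero Mbar (A - Mbar) hMN c]
  abel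

lemma phi_tendsto (K ρ : ℝ) (hρ : ρ < 1) :
    Tendsto (fun x : ℝ => (K * Real.exp (ρ * x) + 1) / (Real.exp x - 1)) atTop (nhds 0) := by
  have heq : ∀ x : ℝ, (K * Real.exp (ρ * x) + 1) / (Real.exp x - 1)
      = (K * Real.exp ((ρ - 1) * x) + Real.exp (-x)) / (1 - Real.exp (-x)) := by
    intro x
    have h1 : K * Real.exp ((ρ - 1) * x) + Real.exp (-x)
        = (K * Real.exp (ρ * x) + 1) * Real.exp (-x) := by
      rw [add_mul, one_mul, mul_assoc, ← Real.exp_add]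
      have : ρ * x + -x = (ρ - 1) * x := by ring
      rw [this]
    have h2 : 1 - Real.exp (-x) = (Real.exp x - 1) * Real.exp (-x) := by
      rw [sub_mul, one_mul, ← Real.exp_add, add_neg_cancel, Real.exp_zero]
    rw [h1, h2, mul_div_mul_right _ _ (Real.exp_ne_zero (-x))]
  have hexp1 : Tendsto (fun x : ℝ => Real.exp (-x)) atTop (nhds 0) :=
    Real.tendsto_exp_atBot.comp tendsto_neg_atTop_atBot
  have hexp2 : Tendsto (fun x : ℝ => Real.exp ((ρ - 1) * x)) atTop (nhds 0) := by
    have h5 : Tendsto (fun x : ℝ => (ρ - 1) * x) atTop atBot := by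
      have h6 : Tendsto (fun x : ℝ => (1 - ρ) * x) atTop atTop :=
        tendsto_id.const_mul_atTop (by linarith)
      have h7 := tendsto_neg_atTop_atBot.comp h6
      exact h7.congr fun x => by simp [Function.comp]; ring
    exact Real.tendsto_exp_atBot.comp h5
  have hnum : Tendsto (fun x : ℝ => K * Real.exp ((ρ - 1) * x) + Real.exp (-x)) atTop
      (nhds (K * 0 + 0)) := (hexp2.const_mul K).add hexp1
  have hden : Tendsto (fun x : ℝ => 1 - Real.exp (-x)) atTop (nhds (1 - 0)) :=
    tendsto_const_nhds.sub hexp1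
  have hG := hnum.div hden (by norm_num)
  have hG0 : Tendsto (fun x : ℝ => (K * Real.exp ((ρ - 1) * x) + Real.exp (-x))
      / (1 - Real.exp (-x))) atTop (nhds 0) := by simpa [Pi.div_def] using hG
  exact hG0.congr fun x => (heq x).symm

end Stmt5Aux


end

open Stmt5Aux

/-- Long-run integration: the normalized type-by-type in-degree matrix
`[exp(m_s·log(t/t₀)·(Q·A·Q⁻¹)) − I] / ((t/t₀)^{m_s} − 1)` converges entrywise to
`Q·M̄·Q⁻¹` as `t → ∞`. -/
theorem stmt5 (H : ℕ) (hH : 1 ≤ H) (A Mbar : Matrix (Fin H) (Fin H) ℝ)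
    (hpos : ∀ i j, 0 < A i j) (hrow : ∀ i, ∑ j, A i j = 1)
    (hconv : ∀ i j, Tendsto (fun μ : ℕ => (A ^ μ) i j) atTop (nhds (Mbar i j)))
    (d : Fin H → ℝ) (hd : ∀ i, 0 < d i)
    (ms t₀ : ℝ) (hms : ms ∈ Set.Ioo (0 : ℝ) 1) (ht₀ : 0 < t₀) (i j : Fin H) :
    Tendsto (fun t : ℝ =>
        ((NormedSpace.exp
            ((ms * Real.log (t / t₀)) • (Matrix.diagonal d * A * (Matrix.diagonal d)⁻¹)) - 1) i j)
          / ((t / t₀) ^ ms - 1))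
      atTop (nhds ((Matrix.diagonal d * Mbar * (Matrix.diagonal d)⁻¹) i j)) := by
  obtain ⟨hms0, hms1⟩ := hms
  -- Step 1: algebraic properties of Mbar
  have hAM : A * Mbar = Mbar := by
    ext i' j'
    have h1 : Tendsto (fun μ : ℕ => (A ^ (μ + 1)) i' j') atTop (nhds (Mbar i' j')) :=
      (hconv i' j').comp (tendsto_add_atTop_nat 1)
    have h2 : Tendsto (fun μ : ℕ => (A ^ (μ + 1)) i' j') atTop (nhds ((A * Mbar) i' j')) := by
      have he : ∀ μ : ℕ, (A ^ (μ + 1)) i' j' = ∑ k, A i' k * (A ^ μ) k j' := by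
        intro μ
        rw [pow_succ, pow_mul_comm', Matrix.mul_apply]
      rw [Matrix.mul_apply]
      simp only [he]
      exact tendsto_finset_sum _ fun k _ => tendsto_const_nhds.mul (hconv k j')
    exact tendsto_nhds_unique h2 h1
  have hMA : Mbar * A = Mbar := by
    ext i' j'
    have h1 : Tendsto (fun μ : ℕ => (A ^ (μ + 1)) i' j') atTop (nhds (Mbar i' j')) :=
      (hconv i' j').comp (tendsto_add_atTop_nat 1)
    have h2 : Tendsto (fun μ : ℕ => (A ^ (μ + 1)) i' j') atTop (nhds ((Mbar * A) i' j')) := by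
      have he : ∀ μ : ℕ, (A ^ (μ + 1)) i' j' = ∑ k, (A ^ μ) i' k * A k j' := by
        intro μ
        rw [pow_succ, Matrix.mul_apply]
      rw [Matrix.mul_apply]
      simp only [he]
      exact tendsto_finset_sum _ fun k _ => (hconv i' k).mul tendsto_const_nhds
    exact tendsto_nhds_unique h2 h1
  have hMM : Mbar * Mbar = Mbar := by
    ext i' j'
    have hdd : Tendsto (fun μ : ℕ => μ + μ) atTop atTop :=
      tendsto_atTop_mono (fun n => Nat.le_add_left n n) tendsto_id
    have h1 : Tendsto (fun μ : ℕ => (A ^ (μ + μ)) i' j') atTop (nhds (Mbar i' j')) :=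
      (hconv i' j').comp hdd
    have h2 : Tendsto (fun μ : ℕ => (A ^ (μ + μ)) i' j') atTop
        (nhds ((Mbar * Mbar) i' j')) := by
      have he : ∀ μ : ℕ, (A ^ (μ + μ)) i' j' = ∑ k, (A ^ μ) i' k * (A ^ μ) k j' := by
        intro μ
        rw [pow_add, Matrix.mul_apply]
      rw [Matrix.mul_apply]
      simp only [he]
      exact tendsto_finset_sum _ fun k _ => (hconv i' k).mul (hconv k j')
    exact tendsto_nhds_unique h2 h1
  -- Step 2: powers of N = A - Mbar
  set N : Matrix (Fin H) (Fin H) ℝ := A - Mbar with hNdef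
  have hpowM : ∀ μ : ℕ, A ^ μ * Mbar = Mbar := by
    intro μ
    induction μ with
    | zero => simp
    | succ k ih => rw [pow_succ, mul_assoc, hAM, ih]
  have hNpow : ∀ μ : ℕ, N ^ (μ + 1) = A ^ (μ + 1) - Mbar := by
    intro μ
    induction μ with
    | zero => simp [hNdef]
    | succ k ih =>
      rw [pow_succ, ih, hNdef, Matrix.sub_mul, Matrix.mul_sub, Matrix.mul_sub,
        hpowM, hMA, hMM, ← pow_succ]
      abel
  have hNentry : ∀ i' j', Tendsto (fun μ : ℕ => (N ^ μ) i' j') atTop (nhds 0) := by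
    intro i' j'
    have h1 : Tendsto (fun μ : ℕ => (A ^ μ) i' j' - Mbar i' j') atTop (nhds 0) := by
      simpa using (hconv i' j').sub_const (Mbar i' j')
    refine h1.congr' ?_
    filter_upwards [eventually_ge_atTop 1] with μ hμ
    obtain ⟨m, rfl⟩ := Nat.exists_eq_add_of_le hμ
    rw [add_comm 1 m, hNpow m, Matrix.sub_apply]
  have hES : Tendsto (fun μ : ℕ => entSum (N ^ μ)) atTop (nhds 0) := by
    have h1 := tendsto_finset_sum (Finset.univ : Finset (Fin H)) fun i' _ =>
      tendsto_finset_sum (Finset.univ : Finset (Fin H)) fun j' _ => (hNentry i' j').abs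
    simpa [entSum] using h1
  obtain ⟨K, ρ, hK0, hρ0, hρ1, hKρ⟩ := geom_bound N hES
  -- Step 3: the diagonal matrix
  set D : Matrix (Fin H) (Fin H) ℝ := Matrix.diagonal d with hDdef
  have hdet : IsUnit D.det := by
    rw [hDdef, Matrix.det_diagonal]
    exact (Finset.prod_pos fun k _ => hd k).ne'.isUnit
  have hD : IsUnit D := (Matrix.isUnit_iff_isUnit_det D).2 hdet
  have hDD : D * D⁻¹ = 1 := Matrix.mul_nonsing_inv D hdet
  have hDinv : D⁻¹ = Matrix.diagonal fun k => (d k)⁻¹ := by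
    apply Matrix.inv_eq_right_inv
    rw [hDdef, Matrix.diagonal_mul_diagonal]
    have h : (fun k => d k * (d k)⁻¹) = fun _ => (1:ℝ) := by
      funext k; exact mul_inv_cancel₀ (hd k).ne'
    rw [h, Matrix.diagonal_one]
  set L : ℝ := (D * Mbar * D⁻¹) i j with hLdef
  -- Step 4: eventual formula
  set c : ℝ → ℝ := fun t => ms * Real.log (t / t₀) with hcdef
  have heq : ∀ᶠ t in atTop,
      ((NormedSpace.exp ((ms * Real.log (t / t₀)) • (D * A * D⁻¹)) - 1) i j)
          / ((t / t₀) ^ ms - 1)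
        = L + (d i * ((NormedSpace.exp (c t • N) - 1) i j) * (d j)⁻¹)
            / (Real.exp (c t) - 1) := by
    filter_upwards [eventually_gt_atTop t₀] with t ht
    have hts : 1 < t / t₀ := (one_lt_div ht₀).2 ht
    have hcpos : 0 < c t := mul_pos hms0 (Real.log_pos hts)
    have hrpow : (t / t₀) ^ ms = Real.exp (c t) := by
      rw [Real.rpow_def_of_pos (by linarith), mul_comm]
    have hexpc : 1 < Real.exp (c t) := by
      calc (1:ℝ) = Real.exp 0 := Real.exp_zero.symm
        _ < Real.exp (c t) := Real.exp_lt_exp.2 hcpos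
    have hs0 : Real.exp (c t) - 1 ≠ 0 := by linarith
    have hmat : (ms * Real.log (t / t₀)) • (D * A * D⁻¹) = D * (c t • A) * D⁻¹ := by
      rw [mul_smul_comm, smul_mul_assoc]
    have hconj : NormedSpace.exp (D * (c t • A) * D⁻¹)
        = D * NormedSpace.exp (c t • A) * D⁻¹ := Matrix.exp_conj D (c t • A) hD
    have hdec := exp_decomp A Mbar hAM hMA hMM (c t)
    have hX : NormedSpace.exp ((ms * Real.log (t / t₀)) • (D * A * D⁻¹)) - 1
        = (Real.exp (c t) - 1) • (D * Mbar * D⁻¹)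
          + D * (NormedSpace.exp (c t • N) - 1) * D⁻¹ := by
      rw [hmat, hconj, hdec]
      rw [Matrix.mul_add, Matrix.mul_add, Matrix.add_mul, Matrix.add_mul, Matrix.mul_one, hDD,
        mul_smul_comm, smul_mul_assoc]
      abel
    rw [hrpow, hX]
    rw [Matrix.add_apply, Matrix.smul_apply, smul_eq_mul]
    have hentryD : (D * (NormedSpace.exp (c t • N) - 1) * D⁻¹) i j
        = d i * ((NormedSpace.exp (c t • N) - 1) i j) * (d j)⁻¹ := by
      rw [hDinv, hDdef, Matrix.mul_diagonal, Matrix.diagonal_mul]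
    rw [hentryD, _root_.add_div]
    congr 1
    rw [mul_comm, mul_div_assoc, div_self hs0, mul_one]
  -- Step 5: the remainder tends to zero
  have hct : Tendsto c atTop atTop := by
    refine Tendsto.const_mul_atTop hms0 ?_
    exact Real.tendsto_log_atTop.comp (tendsto_id.atTop_div_const ht₀)
  have hrem : Tendsto (fun t : ℝ =>
      (d i * ((NormedSpace.exp (c t • N) - 1) i j) * (d j)⁻¹) / (Real.exp (c t) - 1))
      atTop (nhds 0) := by
    have hphi : Tendsto (fun x : ℝ => (K * Real.exp (ρ * x) + 1) / (Real.exp x - 1))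
        atTop (nhds 0) := phi_tendsto K ρ hρ1
    have hBt : Tendsto (fun t : ℝ =>
        (d i * (d j)⁻¹) * ((K * Real.exp (ρ * c t) + 1) / (Real.exp (c t) - 1)))
        atTop (nhds ((d i * (d j)⁻¹) * 0)) := (hphi.comp hct).const_mul _
    refine squeeze_zero_norm' ?_ (by simpa using hBt)
    filter_upwards [hct.eventually_ge_atTop 0, (hct.eventually_gt_atTop 0).mono
      (fun t htc => by
        calc (1:ℝ) = Real.exp 0 := Real.exp_zero.symm
          _ < Real.exp (c t) := Real.exp_lt_exp.2 htc)] with t hc0 hexpc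
    have hs : 0 < Real.exp (c t) - 1 := by linarith
    have hEbound : |(NormedSpace.exp (c t • N) - 1) i j| ≤ K * Real.exp (ρ * c t) + 1 := by
      rw [Matrix.sub_apply]
      refine (abs_sub _ _).trans ?_
      have h1 : |(NormedSpace.exp (c t • N)) i j| ≤ K * Real.exp (ρ * c t) :=
        abs_exp_entry_le N K ρ hK0 hρ0.le hKρ (c t) hc0 i j
      have h2 : |(1 : Matrix (Fin H) (Fin H) ℝ) i j| ≤ 1 := by
        rw [Matrix.one_apply]
        split_ifs <;> norm_num
      linarith
    rw [Real.norm_eq_abs, abs_div, abs_of_pos hs, abs_mul, abs_mul,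
      abs_of_pos (hd i), abs_of_pos (inv_pos.2 (hd j))]
    rw [div_le_iff₀ hs]
    have hij : 0 < d i * (d j)⁻¹ := mul_pos (hd i) (inv_pos.2 (hd j))
    calc d i * |(NormedSpace.exp (c t • N) - 1) i j| * (d j)⁻¹
        = (d i * (d j)⁻¹) * |(NormedSpace.exp (c t • N) - 1) i j| := by ring
      _ ≤ (d i * (d j)⁻¹) * (K * Real.exp (ρ * c t) + 1) :=
          mul_le_mul_of_nonneg_left hEbound hij.le
      _ = (d i * (d j)⁻¹) * ((K * Real.exp (ρ * c t) + 1) / (Real.exp (c t) - 1))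
            * (Real.exp (c t) - 1) := by
          rw [mul_assoc (d i * (d j)⁻¹), div_mul_cancel₀ _ hs.ne']
  have hfinal : Tendsto (fun t : ℝ => L
      + (d i * ((NormedSpace.exp (c t • N) - 1) i j) * (d j)⁻¹) / (Real.exp (c t) - 1))
      atTop (nhds (L + 0)) := tendsto_const_nhds.add hrem
  rw [add_zero] at hfinal
  exact hfinal.congr' (heq.mono fun t h => h.symm)
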